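/- Under the same setting (subshift of finite type X, A Lipschitz, non-positive, m(A)=0, Mañé potential S), if x, y ∈ X satisfy S(x,y) + S(y,x) = 0, then S(x,z) = S(y,z) for all z ∈ X. -/

import Mathlib

open Filter MeasureTheory Classical

/-- The left shift on one-sided sequences. -/
def shift {m : ℕ} (x : ℕ → Fin m) : ℕ → Fin m := fun n => x (n + 1)

/-- The metric `d(x,y) = θ^{min{i : x_i ≠ y_i}}` on sequence space. -/
noncomputable def shiftDist (θ : ℝ) {m : ℕ} (x y : ℕ → Fin m) : ℝ :=
  if x = y then 0 else θ ^ sInf {i : ℕ | x i ≠ y i}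

/-- The Birkhoff sum `S_n(A) = A + A∘σ + ... + A∘σ^{n-1}`. -/
noncomputable def birkhoff {m : ℕ} (A : (ℕ → Fin m) → ℝ) (n : ℕ) (x : ℕ → Fin m) : ℝ :=
  ∑ i ∈ Finset.range n, A (shift^[i] x)

/-- The Mañé potential
`S(x,y) = lim_{ε→0} sup {S_n(A)(z) : σⁿ(z) = y, d(x,z) < ε, n ≥ 1, z ∈ X}`,
with values in the extended reals. -/
noncomputable def manePotential {m : ℕ} (θ : ℝ) (X : Set (ℕ → Fin m))
    (A : (ℕ → Fin m) → ℝ) (x y : ℕ → Fin m) : EReal :=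
  ⨅ (ε : ℝ) (_ : 0 < ε),
    sSup {v : EReal | ∃ n : ℕ, 1 ≤ n ∧ ∃ z ∈ X,
      shift^[n] z = y ∧ shiftDist θ x z < ε ∧ v = (birkhoff A n z : EReal)}

/-- `X` is a subshift of finite type: the sequences avoiding a finite set of
forbidden words. -/
def IsSFT {m : ℕ} (X : Set (ℕ → Fin m)) : Prop :=
  ∃ F : Set (List (Fin m)), F.Finite ∧
    X = {x | ∀ (i l : ℕ), List.ofFn (fun j : Fin l => x (i + j)) ∉ F}

/-- `m(A) = 0`: the supremum of `∫ A dν` over shift-invariant probability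
measures giving full mass to `X` is zero. -/
def MaxIntegralZero {m : ℕ} (X : Set (ℕ → Fin m)) (A : (ℕ → Fin m) → ℝ) : Prop :=
  sSup {r : ℝ | ∃ ν : Measure (ℕ → Fin m), IsProbabilityMeasure ν ∧
    ν.map shift = ν ∧ ν X = 1 ∧ r = ∫ x, A x ∂ν} = 0

lemma shift_iterate_apply {m : ℕ} (n : ℕ) (x : ℕ → Fin m) (i : ℕ) :
    (shift^[n] x) i = x (i + n) := by
  induction n generalizing x with
  | zero => rfl
  | succ n ih =>
    rw [Function.iterate_succ_apply, ih]
    show x (i + n + 1) = x (i + (n+1))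
    ring_nf

lemma shiftDist_nonneg {m : ℕ} (θ : ℝ) (hθ : 0 ≤ θ) (x y : ℕ → Fin m) :
    0 ≤ shiftDist θ x y := by
  unfold shiftDist; split
  · exact le_rfl
  · positivity

lemma agree_of_dist_lt {m : ℕ} {θ : ℝ} (hθ0 : 0 < θ) (hθ1 : θ < 1)
    {a b : ℕ → Fin m} {N : ℕ} (h : shiftDist θ a b < θ ^ N) :
    ∀ i ≤ N, a i = b i := by
  intro i hi
  unfold shiftDist at h
  split at h
  · subst ‹a = b›; rfl
  · rename_i hne
    have hNj : N < sInf {i : ℕ | a i ≠ b i} :=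
      (pow_lt_pow_iff_right_of_lt_one₀ hθ0 hθ1).mp h
    by_contra hab
    have : i ∈ {i : ℕ | a i ≠ b i} := hab
    have := Nat.sInf_le this
    omega

lemma dist_le_of_agree {m : ℕ} {θ : ℝ} (hθ0 : 0 < θ) (hθ1 : θ < 1)
    {a b : ℕ → Fin m} {M : ℕ} (h : ∀ i < M, a i = b i) :
    shiftDist θ a b ≤ θ ^ M := by
  unfold shiftDist; split
  · positivity
  · rename_i hne
    have hnon : {i : ℕ | a i ≠ b i}.Nonempty := Function.ne_iff.mp hne
    have hM : M ≤ sInf {i : ℕ | a i ≠ b i} := by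
      apply le_csInf hnon
      intro i hi
      by_contra hc
      exact hi (h i (by omega))
    exact pow_le_pow_of_le_one hθ0.le hθ1.le hM

lemma geom_bound {θ : ℝ} (hθ0 : 0 ≤ θ) (hθ1 : θ < 1) (k : ℕ) :
    ∑ i ∈ Finset.range k, θ ^ i ≤ 1 / (1 - θ) := by
  have h1 : (0:ℝ) < 1 - θ := by linarith
  rw [le_div_iff₀ h1]
  have := geom_sum_mul θ k
  have hk : (0:ℝ) ≤ θ ^ k := by positivity
  nlinarith [this]

lemma orbit_mem {m : ℕ} {X : Set (ℕ → Fin m)} (hXinv : ∀ x ∈ X, shift x ∈ X)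
    {z : ℕ → Fin m} (hz : z ∈ X) (i : ℕ) : shift^[i] z ∈ X := by
  induction i with
  | zero => exact hz
  | succ n ih => rw [Function.iterate_succ_apply']; exact hXinv _ ih

lemma birkhoff_nonpos {m : ℕ} {X : Set (ℕ → Fin m)} (hXinv : ∀ x ∈ X, shift x ∈ X)
    {A : (ℕ → Fin m) → ℝ} (hAneg : ∀ x ∈ X, A x ≤ 0)
    {z : ℕ → Fin m} (hz : z ∈ X) (n : ℕ) : birkhoff A n z ≤ 0 :=
  Finset.sum_nonpos fun i _ => hAneg _ (orbit_mem hXinv hz i)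

lemma sSup_set_nonpos {m : ℕ} {θ : ℝ} {X : Set (ℕ → Fin m)} (hXinv : ∀ x ∈ X, shift x ∈ X)
    {A : (ℕ → Fin m) → ℝ} (hAneg : ∀ x ∈ X, A x ≤ 0) (x y : ℕ → Fin m) (ε : ℝ) :
    sSup {v : EReal | ∃ n : ℕ, 1 ≤ n ∧ ∃ z ∈ X,
      shift^[n] z = y ∧ shiftDist θ x z < ε ∧ v = (birkhoff A n z : EReal)} ≤ 0 := by
  apply sSup_le
  rintro v ⟨n, -, z, hz, -, -, rfl⟩
  exact_mod_cast EReal.coe_le_coe_iff.mpr (birkhoff_nonpos hXinv hAneg hz n)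

lemma mane_nonpos {m : ℕ} {θ : ℝ} {X : Set (ℕ → Fin m)} (hXinv : ∀ x ∈ X, shift x ∈ X)
    {A : (ℕ → Fin m) → ℝ} (hAneg : ∀ x ∈ X, A x ≤ 0) (x y : ℕ → Fin m) :
    manePotential θ X A x y ≤ 0 := by
  refine le_trans (iInf_le _ 1) (le_trans (iInf_le _ one_pos) ?_)
  exact sSup_set_nonpos hXinv hAneg x y 1

lemma ereal_le_of_forall_add {P Q : EReal} (h : ∀ c : ℝ, 0 < c → P ≤ Q + (c : EReal)) :
    P ≤ Q := by
  by_contra hc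
  push_neg at hc
  rcases eq_or_ne Q ⊥ with hQ | hQ
  · have := h 1 one_pos
    rw [hQ, EReal.bot_add] at this
    exact hc.not_ge (hQ ▸ this)
  rcases eq_or_ne Q ⊤ with hQT | hQT
  · exact hc.not_ge (hQT ▸ le_top)
  lift Q to ℝ using ⟨hQT, hQ⟩
  obtain ⟨r, hr1, hr2⟩ := exists_between hc
  have hrT : r ≠ ⊤ := (hr2.trans_le le_top).ne
  have hrB : r ≠ ⊥ := by
    intro hb; rw [hb] at hr1; exact (not_lt_bot hr1)
  lift r to ℝ using ⟨hrT, hrB⟩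
  have hQr : Q < r := EReal.coe_lt_coe_iff.mp hr1
  have h2 := h (r - Q) (by linarith)
  rw [← EReal.coe_add] at h2
  have h3 : P ≤ (r : EReal) := by
    convert h2 using 2; ring
  exact hr2.not_ge h3

lemma mane_subadd {m : ℕ} {θ : ℝ} (hθ0 : 0 < θ) (hθ1 : θ < 1)
    {X : Set (ℕ → Fin m)} (hXinv : ∀ x ∈ X, shift x ∈ X) (hSFT : IsSFT X)
    {A : (ℕ → Fin m) → ℝ}
    (hALip : ∃ C : ℝ, ∀ x ∈ X, ∀ y ∈ X, |A x - A y| ≤ C * shiftDist θ x y)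
    (hAneg : ∀ x ∈ X, A x ≤ 0) (x y z : ℕ → Fin m) :
    manePotential θ X A x y + manePotential θ X A y z ≤ manePotential θ X A x z := by
  obtain ⟨C₀, hC₀⟩ := hALip
  set C := max C₀ 0 with hCdef
  have hCnn : (0:ℝ) ≤ C := le_max_right _ _
  have hC : ∀ a ∈ X, ∀ b ∈ X, |A a - A b| ≤ C * shiftDist θ a b := fun a ha b hb =>
    (hC₀ a ha b hb).trans
      (mul_le_mul_of_nonneg_right (le_max_left _ _) (shiftDist_nonneg θ hθ0.le a b))
  obtain ⟨F, hFfin, hXeq⟩ := hSFT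
  obtain ⟨L, hL⟩ : ∃ L, ∀ w ∈ F, w.length ≤ L := by
    obtain ⟨L, hL⟩ := (hFfin.image List.length).bddAbove
    exact ⟨L, fun w hw => hL (Set.mem_image_of_mem _ hw)⟩
  refine le_iInf fun ε => le_iInf fun hε => ereal_le_of_forall_add fun c hc => ?_
  have h1θ : (0:ℝ) < 1 - θ := by linarith
  obtain ⟨N, hθNε, hNL, herr⟩ : ∃ N : ℕ, θ ^ N < ε ∧ L ≤ N ∧
      C * θ ^ (N + 1) * (1 / (1 - θ)) ≤ c / 2 := by
    have hD : (0:ℝ) < C / (1 - θ) + 1 := by positivity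
    have ht0 : (0:ℝ) < min ε ((c/2) / (C / (1 - θ) + 1)) := lt_min hε (by positivity)
    obtain ⟨N₀, hN₀⟩ := exists_pow_lt_of_lt_one ht0 hθ1
    refine ⟨max N₀ L, ?_, le_max_right _ _, ?_⟩
    · exact lt_of_le_of_lt
        (pow_le_pow_of_le_one hθ0.le hθ1.le (le_max_left _ _))
        (hN₀.trans_le (min_le_left _ _))
    · set N := max N₀ L
      have hθNpos : (0:ℝ) < θ ^ N := pow_pos hθ0 N
      have hmin : θ ^ N < (c/2) / (C / (1 - θ) + 1) :=
        lt_of_le_of_lt (pow_le_pow_of_le_one hθ0.le hθ1.le (le_max_left _ _))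
          (hN₀.trans_le (min_le_right _ _))
      have h1 : θ ^ N * (C / (1 - θ) + 1) < c / 2 := (lt_div_iff₀ hD).mp hmin
      have hE : (0:ℝ) ≤ C / (1 - θ) := by positivity
      have hA : C * θ ^ (N + 1) * (1 / (1 - θ)) = (C / (1 - θ)) * θ ^ N * θ := by
        rw [pow_succ]; ring
      have hB : (C / (1 - θ)) * θ ^ N * θ ≤ (C / (1 - θ)) * θ ^ N := by
        nlinarith [mul_nonneg (mul_nonneg hE hθNpos.le) h1θ.le]
      have hCstep : (C / (1 - θ)) * θ ^ N ≤ θ ^ N * (C / (1 - θ) + 1) := by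
        nlinarith [hθNpos.le]
      linarith [hA ▸ (hB.trans hCstep)]
  have hθNpos : (0:ℝ) < θ ^ N := pow_pos hθ0 N
  -- the two inner suprema at scale θ^N
  set Sxy := {v : EReal | ∃ n : ℕ, 1 ≤ n ∧ ∃ w ∈ X,
      shift^[n] w = y ∧ shiftDist θ x w < θ ^ N ∧ v = (birkhoff A n w : EReal)} with hSxy
  set Syz := {v : EReal | ∃ n : ℕ, 1 ≤ n ∧ ∃ w ∈ X,
      shift^[n] w = z ∧ shiftDist θ y w < θ ^ N ∧ v = (birkhoff A n w : EReal)} with hSyz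
  have haS : manePotential θ X A x y ≤ sSup Sxy := le_trans (iInf_le _ (θ ^ N)) (iInf_le _ hθNpos)
  have hbS : manePotential θ X A y z ≤ sSup Syz := le_trans (iInf_le _ (θ ^ N)) (iInf_le _ hθNpos)
  rcases eq_or_ne (sSup Sxy) ⊥ with hbot | hbotxy
  · have h0 : manePotential θ X A x y = ⊥ := le_bot_iff.mp (hbot ▸ haS)
    rw [h0, EReal.bot_add]
    exact bot_le
  rcases eq_or_ne (sSup Syz) ⊥ with hbot | hbotyz
  · have h0 : manePotential θ X A y z = ⊥ := le_bot_iff.mp (hbot ▸ hbS)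
    rw [h0, EReal.add_bot]
    exact bot_le
  have haTop : sSup Sxy ≠ ⊤ :=
    ((sSup_set_nonpos hXinv hAneg x y (θ^N)).trans_lt (by norm_num : (0:EReal) < ⊤)).ne
  have hbTop : sSup Syz ≠ ⊤ :=
    ((sSup_set_nonpos hXinv hAneg y z (θ^N)).trans_lt (by norm_num : (0:EReal) < ⊤)).ne
  set a := (sSup Sxy).toReal with ha
  set b := (sSup Syz).toReal with hb
  have haR : sSup Sxy = (a : EReal) := (EReal.coe_toReal haTop hbotxy).symm
  have hbR : sSup Syz = (b : EReal) := (EReal.coe_toReal hbTop hbotyz).symm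
  -- extract witnesses
  have hwit1 : ((a - c/4 : ℝ) : EReal) < sSup Sxy := by
    rw [haR]; exact_mod_cast (by linarith : a - c/4 < a)
  obtain ⟨v₁, hv₁mem, hv₁lt⟩ := lt_sSup_iff.mp hwit1
  obtain ⟨k, hk1, w, hw, hwk, hwd, rfl⟩ := hv₁mem
  have hv₁ : a - c/4 < birkhoff A k w := EReal.coe_lt_coe_iff.mp hv₁lt
  have hwit2 : ((b - c/4 : ℝ) : EReal) < sSup Syz := by
    rw [hbR]; exact_mod_cast (by linarith : b - c/4 < b)
  obtain ⟨v₂, hv₂mem, hv₂lt⟩ := lt_sSup_iff.mp hwit2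
  obtain ⟨n, hn1, z', hz', hz'n, hz'd, rfl⟩ := hv₂mem
  have hv₂ : b - c/4 < birkhoff A n z' := EReal.coe_lt_coe_iff.mp hv₂lt
  -- agreement facts
  have hyz'agree : ∀ i ≤ N, y i = z' i := agree_of_dist_lt hθ0 hθ1 hz'd
  have hxwagree : ∀ i ≤ N, x i = w i := agree_of_dist_lt hθ0 hθ1 hwd
  -- the concatenated point
  set u : ℕ → Fin m := fun i => if i < k then w i else z' (i - k) with hu
  have hshiftk : shift^[k] u = z' := by
    funext i
    rw [shift_iterate_apply]
    show (if i + k < k then w (i+k) else z' (i + k - k)) = z' i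
    rw [if_neg (by omega)]
    congr 1; omega
  have huw : ∀ i < k + N, u i = w i := by
    intro i hi
    by_cases hik : i < k
    · simp [hu, hik]
    · push_neg at hik
      have h1 : u i = z' (i - k) := by simp [hu, not_lt.mpr hik]
      have h2 : z' (i - k) = y (i - k) := (hyz'agree (i-k) (by omega)).symm
      have h3 : y (i - k) = w i := by
        rw [← hwk, shift_iterate_apply]; congr 1; omega
      rw [h1, h2, h3]
  have hwX : ∀ (i l : ℕ), List.ofFn (fun j : Fin l => w (i + j)) ∉ F := by
    have := hw; rw [hXeq] at this; exact this
  have hz'X : ∀ (i l : ℕ), List.ofFn (fun j : Fin l => z' (i + j)) ∉ F := by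
    have := hz'; rw [hXeq] at this; exact this
  have huX : u ∈ X := by
    rw [hXeq]
    intro i l
    by_cases hle : i + l ≤ k + N
    · have heq : (List.ofFn fun j : Fin l => u (i + j)) = List.ofFn fun j : Fin l => w (i + j) := by
        apply congrArg; funext j
        exact huw (i + j) (by omega)
      rw [heq]; exact hwX i l
    · push_neg at hle
      by_cases hlL : l ≤ L
      · have hik : k ≤ i := by omega
        have heq : (List.ofFn fun j : Fin l => u (i + j))
            = List.ofFn fun j : Fin l => z' ((i - k) + j) := by
          apply congrArg; funext j
          show (if i + j < k then w (i+j) else z' (i + j - k)) = z' ((i - k) + j)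
          rw [if_neg (by omega)]
          congr 1; omega
        rw [heq]; exact hz'X (i - k) l
      · intro hmem
        have hlen := hL _ hmem
        simp only [List.length_ofFn] at hlen
        omega
  have hdxu : shiftDist θ x u < ε := by
    have hagree : ∀ i < N + 1, x i = u i := by
      intro i hi
      have h1 := hxwagree i (by omega)
      have h2 := huw i (by omega)
      rw [h1, ← h2]
    refine lt_of_le_of_lt (dist_le_of_agree hθ0 hθ1 hagree) ?_
    exact lt_of_le_of_lt (pow_le_pow_of_le_one hθ0.le hθ1.le (by omega : N ≤ N + 1)) hθNε
  have hshiftnk : shift^[k + n] u = z := by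
    rw [add_comm k n, Function.iterate_add_apply, hshiftk, hz'n]
  have hbsplit : birkhoff A (k + n) u = birkhoff A k u + birkhoff A n z' := by
    unfold birkhoff
    rw [Finset.sum_range_add]
    congr 1
    apply Finset.sum_congr rfl
    intro i _
    rw [add_comm k i, Function.iterate_add_apply, hshiftk]
  have hbdiff : |birkhoff A k u - birkhoff A k w| ≤ c / 2 := by
    unfold birkhoff
    rw [← Finset.sum_sub_distrib]
    refine le_trans (Finset.abs_sum_le_sum_abs _ _) ?_
    have hterm : ∀ i ∈ Finset.range k,
        |A (shift^[i] u) - A (shift^[i] w)| ≤ C * θ ^ (N + 1) * θ ^ (k - 1 - i) := by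
      intro i hi
      have hi' := Finset.mem_range.mp hi
      have hd : shiftDist θ (shift^[i] u) (shift^[i] w) ≤ θ ^ (k + N - i) := by
        apply dist_le_of_agree hθ0 hθ1
        intro j hj
        rw [shift_iterate_apply, shift_iterate_apply]
        exact huw (j + i) (by omega)
      have hlip := hC _ (orbit_mem hXinv huX i) _ (orbit_mem hXinv hw i)
      have hpoweq : C * θ ^ (k + N - i) = C * θ ^ (N + 1) * θ ^ (k - 1 - i) := by
        rw [mul_assoc, ← pow_add]
        congr 2
        omega
      calc |A (shift^[i] u) - A (shift^[i] w)|
          ≤ C * shiftDist θ (shift^[i] u) (shift^[i] w) := hlip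
        _ ≤ C * θ ^ (k + N - i) := mul_le_mul_of_nonneg_left hd hCnn
        _ = C * θ ^ (N + 1) * θ ^ (k - 1 - i) := hpoweq
    refine le_trans (Finset.sum_le_sum hterm) ?_
    rw [← Finset.mul_sum]
    have hrefl : ∑ i ∈ Finset.range k, θ ^ (k - 1 - i) = ∑ i ∈ Finset.range k, θ ^ i :=
      Finset.sum_range_reflect (fun j => θ ^ j) k
    rw [hrefl]
    calc C * θ ^ (N + 1) * ∑ i ∈ Finset.range k, θ ^ i
        ≤ C * θ ^ (N + 1) * (1 / (1 - θ)) := by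
          exact mul_le_mul_of_nonneg_left (geom_bound hθ0.le hθ1 k) (by positivity)
      _ ≤ c / 2 := herr
  have hkey : a + b ≤ birkhoff A (k + n) u + c := by
    have h3 := abs_le.mp hbdiff
    rw [hbsplit]
    linarith [h3.1, h3.2]
  have hmem : ((birkhoff A (k + n) u : ℝ) : EReal) ∈ {v : EReal | ∃ n : ℕ, 1 ≤ n ∧ ∃ z' ∈ X,
      shift^[n] z' = z ∧ shiftDist θ x z' < ε ∧ v = (birkhoff A n z' : EReal)} :=
    ⟨k + n, by omega, u, huX, hshiftnk, hdxu, rfl⟩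
  calc manePotential θ X A x y + manePotential θ X A y z
      ≤ sSup Sxy + sSup Syz := add_le_add haS hbS
    _ = ((a + b : ℝ) : EReal) := by rw [haR, hbR, EReal.coe_add]
    _ ≤ ((birkhoff A (k + n) u + c : ℝ) : EReal) := EReal.coe_le_coe_iff.mpr hkey
    _ = ((birkhoff A (k + n) u : ℝ) : EReal) + (c : EReal) := by rw [EReal.coe_add]
    _ ≤ _ + (c : EReal) := add_le_add_left (le_sSup hmem) _

theorem stmt16 (d : ℕ) (θ : ℝ) (hθ0 : 0 < θ) (hθ1 : θ < 1)
    (X : Set (ℕ → Fin (d + 1))) (hXc : IsClosed X)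
    (hXinv : ∀ x ∈ X, shift x ∈ X) (hSFT : IsSFT X)
    (A : (ℕ → Fin (d + 1)) → ℝ)
    (hALip : ∃ C : ℝ, ∀ x ∈ X, ∀ y ∈ X, |A x - A y| ≤ C * shiftDist θ x y)
    (hAneg : ∀ x ∈ X, A x ≤ 0)
    (hmA : MaxIntegralZero X A)
    (x y : ℕ → Fin (d + 1)) (hx : x ∈ X) (hy : y ∈ X)
    (hxy : manePotential θ X A x y + manePotential θ X A y x = 0) :
    ∀ z ∈ X, manePotential θ X A x z = manePotential θ X A y z := by
  intro z hz
  have ha0 : manePotential θ X A x y ≤ 0 := mane_nonpos hXinv hAneg x y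
  have hb0 : manePotential θ X A y x ≤ 0 := mane_nonpos hXinv hAneg y x
  have hxy0 : manePotential θ X A x y = 0 := by
    refine le_antisymm ha0 ?_
    calc (0 : EReal) = manePotential θ X A x y + manePotential θ X A y x := hxy.symm
      _ ≤ manePotential θ X A x y + 0 := add_le_add_right hb0 _
      _ = manePotential θ X A x y := add_zero _
  have hyx0 : manePotential θ X A y x = 0 := by
    refine le_antisymm hb0 ?_
    calc (0 : EReal) = manePotential θ X A x y + manePotential θ X A y x := hxy.symm
      _ ≤ 0 + manePotential θ X A y x := add_le_add_left ha0 _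
      _ = manePotential θ X A y x := zero_add _
  have h1 : manePotential θ X A y z ≤ manePotential θ X A x z := by
    have h := mane_subadd hθ0 hθ1 hXinv hSFT hALip hAneg x y z
    rwa [hxy0, zero_add] at h
  have h2 : manePotential θ X A x z ≤ manePotential θ X A y z := by
    have h := mane_subadd hθ0 hθ1 hXinv hSFT hALip hAneg y x z
    rwa [hyx0, zero_add] at h
  exact le_antisymm h2 h1
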